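/- Let m, n be positive integers with m not dividing n, let d = n/gcd(m,n) > 1, and define r(0) = p, r(t+1) = lcm(n, r(t))·m/n. Then there exists p such that the sequence (r(t)) is unbounded. Conversely, if m divides n, the sequence is bounded for every initial p. -/

import Mathlib

/-- for `A ∈ M_{m×n}` acting on dimensions by
`r ↦ lcm(n, r)·m/n`: if `m ∤ n` (so that `d = n/gcd(m,n) > 1`) there is an initial
dimension `p` from which the dimension sequence is unbounded; conversely, if `m ∣ n`
the sequence is bounded for every initial `p`. -/
theorem dim_bounded_iff (m n : ℕ) (hm : 0 < m) (hn : 0 < n) :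
    (¬ m ∣ n → 1 < n / Nat.gcd m n →
      ∃ p : ℕ, 0 < p ∧ ∀ r : ℕ → ℕ, r 0 = p →
        (∀ t, r (t + 1) = Nat.lcm n (r t) * m / n) → ∀ B : ℕ, ∃ t, B < r t) ∧
    (m ∣ n → ∀ p : ℕ, 0 < p → ∀ r : ℕ → ℕ, r 0 = p →
      (∀ t, r (t + 1) = Nat.lcm n (r t) * m / n) → ∃ B : ℕ, ∀ t, r t ≤ B) := by
  constructor
  · intro hnd _
    set g := Nat.gcd m n with hg
    have hg0 : 0 < g := Nat.gcd_pos_of_pos_left n hm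
    obtain ⟨a, ha⟩ : g ∣ m := Nat.gcd_dvd_left m n
    obtain ⟨b, hb⟩ : g ∣ n := Nat.gcd_dvd_right m n
    have ha0 : 0 < a := by nlinarith [hm, ha]
    have hb0 : 0 < b := by nlinarith [hn, hb]
    have hab : Nat.Coprime a b := by
      have h := Nat.coprime_div_gcd_div_gcd (m := m) (n := n) hg0
      rw [← hg] at h
      rw [Nat.Coprime]
      have h1 : m / g = a := by rw [ha, Nat.mul_div_cancel_left _ hg0]
      have h2 : n / g = b := by rw [hb, Nat.mul_div_cancel_left _ hg0]
      rwa [h1, h2] at h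
    have ha2 : 2 ≤ a := by
      by_contra h
      have h1 : a = 1 := by omega
      subst h1
      exact hnd ⟨b, by rw [hb, ha]; ring⟩
    refine ⟨m, hm, fun r hr0 hstep B => ?_⟩
    have key : ∀ t, r t = g * a ^ (t + 1) := by
      intro t
      induction t with
      | zero => simpa [ha, pow_one] using hr0
      | succ t ih =>
        have hcop : Nat.gcd b (a ^ (t + 1)) = 1 := (hab.symm.pow_right _)
        have hgcd : Nat.gcd n (g * a ^ (t + 1)) = g := by
          rw [hb, Nat.gcd_mul_left, hcop, mul_one]
        have hlcm : Nat.lcm n (g * a ^ (t + 1)) = g * b * a ^ (t + 1) := by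
          rw [Nat.lcm, hgcd, hb]
          rw [show g * b * (g * a ^ (t + 1)) = g * (g * b * a ^ (t + 1)) by ring]
          exact Nat.mul_div_cancel_left _ hg0
        rw [hstep, ih, hlcm, ha, hb]
        rw [show g * b * a ^ (t + 1) * (g * a) = g * b * (g * a ^ (t + 1 + 1)) by ring]
        exact Nat.mul_div_cancel_left _ (by positivity)
    refine ⟨B, ?_⟩
    have h1 : B < 2 ^ (B + 1) :=
      lt_of_lt_of_le (Nat.lt_two_pow_self (n := B)) (Nat.pow_le_pow_right (by norm_num) (Nat.le_succ B))
    have h2 : 2 ^ (B + 1) ≤ a ^ (B + 1) := Nat.pow_le_pow_left ha2 _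
    have h3 : a ^ (B + 1) ≤ g * a ^ (B + 1) := Nat.le_mul_of_pos_left _ hg0
    rw [key B]
    omega
  · intro hd p hp r hr0 hstep
    obtain ⟨k, hk⟩ := hd
    have hk0 : 0 < k := by nlinarith [hn, hk]
    have hL0 : 0 < Nat.lcm n p := Nat.pos_of_ne_zero (Nat.lcm_ne_zero hn.ne' hp.ne')
    refine ⟨Nat.lcm n p, fun t => ?_⟩
    have key : ∀ t, r t ∣ Nat.lcm n p := by
      intro t
      induction t with
      | zero => rw [hr0]; exact Nat.dvd_lcm_right n p
      | succ t ih =>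
        have hL : Nat.lcm n (r t) ∣ Nat.lcm n p :=
          Nat.lcm_dvd (Nat.dvd_lcm_left n p) ih
        have hkd : k ∣ Nat.lcm n (r t) :=
          dvd_trans ⟨m, by rw [hk]; ring⟩ (Nat.dvd_lcm_left n (r t))
        have hdiv : ∀ L : ℕ, L * m / n = L / k := by
          intro L
          rw [hk, mul_comm L m, Nat.mul_div_mul_left _ _ hm]
        rw [hstep, hdiv]
        exact dvd_trans (Nat.div_dvd_of_dvd hkd) hL
    exact Nat.le_of_dvd hL0 (key t)
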